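/- The linear map ι: ℝ^7 → Λ²(ℝ^7)^* sending a vector X to the 2-form X ⌟ φ is injective, and its image is exactly the subspace Λ²₇ = {β ∈ Λ²(ℝ^7)^* : ∗β = (1/2) β ∧ φ}. In particular ι is a linear isomorphism from ℝ^7 onto Λ²₇. -/

import Mathlib

open Finset

/-- Vectors in ℝ⁷. -/
abbrev Vec := Fin 7 → ℝ

/-- Exterior forms on ℝ⁷, represented by their coefficients on increasing
multi-indices: the form is `∑ S, α S • e^S` with `e^S` the wedge of the dual
basis covectors with indices in `S`, in increasing order. -/
abbrev Form := Finset (Fin 7) → ℝ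

noncomputable section

/-- The sign such that `e^A ∧ e^B = mergeSign A B • e^(A ∪ B)` for disjoint `A`, `B`
(each written in increasing order). -/
def mergeSign (A B : Finset (Fin 7)) : ℝ :=
  (-1 : ℝ) ^ (∑ i ∈ A, (B.filter (fun j => j < i)).card)

/-- Wedge product of forms, where `k` is the degree of the first factor. -/
def wedge (k : ℕ) (α β : Form) : Form :=
  fun S => ∑ A ∈ S.powerset.filter (fun A => A.card = k),
    mergeSign A (S \ A) * α A * β (S \ A)

/-- Interior product (contraction) of a vector with a form:
`(iprod v α)(x₁,…) = α(v,x₁,…)`. -/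
def iprod (v : Vec) (α : Form) : Form :=
  fun S => ∑ i : Fin 7,
    if i ∈ S then 0
    else (-1 : ℝ) ^ ((S.filter (fun j => j < i)).card) * v i * α (insert i S)

/-- Hodge star for the standard Euclidean metric and orientation on ℝ⁷,
where `k` is the degree of the input form. -/
def hstar (k : ℕ) (α : Form) : Form :=
  fun S => if S.card = 7 - k then mergeSign Sᶜ S * α Sᶜ else 0

/-- `α` is a (pure) form of degree `k`. -/
def IsDeg (k : ℕ) (α : Form) : Prop := ∀ S, S.card ≠ k → α S = 0

/-- The basis monomial `e^A`. -/
def bm (A : Finset (Fin 7)) : Form := fun S => if S = A then 1 else 0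

/-- The standard volume form `e^{1234567}`. -/
def vol : Form := bm Finset.univ

/-- The standard G₂ 3-form
`φ = e^{123} + e^{145} + e^{167} + e^{246} − e^{257} − e^{347} − e^{356}`
(indices shifted to `0,…,6`). -/
def phi : Form :=
  bm {0,1,2} + bm {0,3,4} + bm {0,5,6} + bm {1,3,5}
    - bm {1,4,6} - bm {2,3,6} - bm {2,4,5}

/-- The standard Euclidean inner product on ℝ⁷. -/
def dot (v w : Vec) : ℝ := ∑ i, v i * w i

/-- The 1-form `⟨v, ·⟩` dual to `v` for the standard metric. -/
def flat (v : Vec) : Form := ∑ i : Fin 7, v i • bm {i}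

/-- The inner product on forms making the monomials `e^S` orthonormal. -/
def formInner (α β : Form) : ℝ := ∑ S : Finset (Fin 7), α S * β S

end
set_option maxRecDepth 100000
set_option maxHeartbeats 1000000

noncomputable def iphi (X : Vec) : Form := fun S =>
  if S = {0,1} then X 2 else if S = {0,2} then -X 1 else if S = {0,3} then X 4 else if S = {0,4} then -X 3 else if S = {0,5} then X 6 else if S = {0,6} then -X 5 else if S = {1,2} then X 0 else if S = {1,3} then X 5 else if S = {1,4} then -X 6 else if S = {1,5} then -X 3 else if S = {1,6} then X 4 else if S = {2,3} then -X 6 else if S = {2,4} then -X 5 else if S = {2,5} then X 4 else if S = {2,6} then X 3 else if S = {3,4} then X 0 else if S = {3,5} then X 1 else if S = {3,6} then -X 2 else if S = {4,5} then -X 2 else if S = {4,6} then -X 1 else if S = {5,6} then X 0 else 0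

lemma negOnePow (n : ℕ) : (-1 : ℝ) ^ n = if Even n then 1 else -1 := by
  rcases Nat.even_or_odd n with h | h
  · simp [h, h.neg_one_pow]
  · simp [h.neg_one_pow, Nat.not_even_iff_odd.2 h]

lemma mergeSign_if (A B : Finset (Fin 7)) :
    mergeSign A B = if Even (∑ i ∈ A, (B.filter (fun j => j < i)).card) then 1 else -1 := by
  rw [mergeSign, negOnePow]

lemma phi_ne {S : Finset (Fin 7)} (h : S.card ≠ 3) : phi S = 0 := by
  have h1 : S ≠ ({0,1,2} : Finset (Fin 7)) := by rintro rfl; exact h (by decide)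
  have h2 : S ≠ ({0,3,4} : Finset (Fin 7)) := by rintro rfl; exact h (by decide)
  have h3 : S ≠ ({0,5,6} : Finset (Fin 7)) := by rintro rfl; exact h (by decide)
  have h4 : S ≠ ({1,3,5} : Finset (Fin 7)) := by rintro rfl; exact h (by decide)
  have h5 : S ≠ ({1,4,6} : Finset (Fin 7)) := by rintro rfl; exact h (by decide)
  have h6 : S ≠ ({2,3,6} : Finset (Fin 7)) := by rintro rfl; exact h (by decide)
  have h7 : S ≠ ({2,4,5} : Finset (Fin 7)) := by rintro rfl; exact h (by decide)
  simp [phi, bm, h1, h2, h3, h4, h5, h6, h7]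

lemma iprod_phi_deg {X : Vec} {S : Finset (Fin 7)} (h : S.card ≠ 2) : iprod X phi S = 0 := by
  rw [iprod]
  refine Finset.sum_eq_zero fun i _ => ?_
  by_cases hi : i ∈ S
  · simp [hi]
  · rw [if_neg hi, phi_ne (by rw [Finset.card_insert_of_notMem hi]; omega), mul_zero]

lemma iphi_deg {X : Vec} {S : Finset (Fin 7)} (h : S.card ≠ 2) : iphi X S = 0 := by
  have h1 : S ≠ ({0,1} : Finset (Fin 7)) := by rintro rfl; exact h (by decide)
  have h2 : S ≠ ({0,2} : Finset (Fin 7)) := by rintro rfl; exact h (by decide)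
  have h3 : S ≠ ({0,3} : Finset (Fin 7)) := by rintro rfl; exact h (by decide)
  have h4 : S ≠ ({0,4} : Finset (Fin 7)) := by rintro rfl; exact h (by decide)
  have h5 : S ≠ ({0,5} : Finset (Fin 7)) := by rintro rfl; exact h (by decide)
  have h6 : S ≠ ({0,6} : Finset (Fin 7)) := by rintro rfl; exact h (by decide)
  have h7 : S ≠ ({1,2} : Finset (Fin 7)) := by rintro rfl; exact h (by decide)
  have h8 : S ≠ ({1,3} : Finset (Fin 7)) := by rintro rfl; exact h (by decide)
  have h9 : S ≠ ({1,4} : Finset (Fin 7)) := by rintro rfl; exact h (by decide)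
  have h10 : S ≠ ({1,5} : Finset (Fin 7)) := by rintro rfl; exact h (by decide)
  have h11 : S ≠ ({1,6} : Finset (Fin 7)) := by rintro rfl; exact h (by decide)
  have h12 : S ≠ ({2,3} : Finset (Fin 7)) := by rintro rfl; exact h (by decide)
  have h13 : S ≠ ({2,4} : Finset (Fin 7)) := by rintro rfl; exact h (by decide)
  have h14 : S ≠ ({2,5} : Finset (Fin 7)) := by rintro rfl; exact h (by decide)
  have h15 : S ≠ ({2,6} : Finset (Fin 7)) := by rintro rfl; exact h (by decide)
  have h16 : S ≠ ({3,4} : Finset (Fin 7)) := by rintro rfl; exact h (by decide)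
  have h17 : S ≠ ({3,5} : Finset (Fin 7)) := by rintro rfl; exact h (by decide)
  have h18 : S ≠ ({3,6} : Finset (Fin 7)) := by rintro rfl; exact h (by decide)
  have h19 : S ≠ ({4,5} : Finset (Fin 7)) := by rintro rfl; exact h (by decide)
  have h20 : S ≠ ({4,6} : Finset (Fin 7)) := by rintro rfl; exact h (by decide)
  have h21 : S ≠ ({5,6} : Finset (Fin 7)) := by rintro rfl; exact h (by decide)
  simp [iphi, h1, h2, h3, h4, h5, h6, h7, h8, h9, h10, h11, h12, h13, h14, h15, h16, h17, h18, h19, h20, h21]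

lemma pairs_mem : ∀ S : Finset (Fin 7), S.card = 2 → S ∈ ({{0,1}, {0,2}, {0,3}, {0,4}, {0,5}, {0,6}, {1,2}, {1,3}, {1,4}, {1,5}, {1,6}, {2,3}, {2,4}, {2,5}, {2,6}, {3,4}, {3,5}, {3,6}, {4,5}, {4,6}, {5,6}} : Finset (Finset (Fin 7))) := by decide

lemma fives_mem : ∀ S : Finset (Fin 7), S.card = 5 → S ∈ ({{0,1,2,3,4}, {0,1,2,3,5}, {0,1,2,3,6}, {0,1,2,4,5}, {0,1,2,4,6}, {0,1,2,5,6}, {0,1,3,4,5}, {0,1,3,4,6}, {0,1,3,5,6}, {0,1,4,5,6}, {0,2,3,4,5}, {0,2,3,4,6}, {0,2,3,5,6}, {0,2,4,5,6}, {0,3,4,5,6}, {1,2,3,4,5}, {1,2,3,4,6}, {1,2,3,5,6}, {1,2,4,5,6}, {1,3,4,5,6}, {2,3,4,5,6}} : Finset (Finset (Fin 7))) := by decide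

lemma iprod_phi_eq (X : Vec) : iprod X phi = iphi X := by
  funext S
  by_cases h : S.card = 2
  · have hm := pairs_mem S h
    fin_cases hm <;>
      · simp (config := { decide := true }) only [iprod, iphi, phi, bm, Fin.sum_univ_seven,
          negOnePow, Pi.add_apply, Pi.sub_apply]
        norm_num
  · rw [iprod_phi_deg h, iphi_deg h]

lemma wedge_phi_deg {b : Form} {S : Finset (Fin 7)} (h : S.card ≠ 5) : wedge 2 b phi S = 0 := by
  rw [wedge]
  refine Finset.sum_eq_zero fun A hA => ?_
  rw [Finset.mem_filter, Finset.mem_powerset] at hA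
  rw [phi_ne ?_, mul_zero]
  rw [Finset.card_sdiff_of_subset hA.1, hA.2]
  have := Finset.card_le_card hA.1
  omega

lemma hs_1 (b : Form) : hstar 2 b ({0,1,2,3,4} : Finset (Fin 7)) = b {5,6} := by
  rw [hstar, if_pos (by decide), mergeSign_if, if_pos (by decide), show (({0,1,2,3,4} : Finset (Fin 7))ᶜ : Finset (Fin 7)) = {5,6} from by decide]
  ring
lemma wd_1 (b : Form) : wedge 2 b phi ({0,1,2,3,4} : Finset (Fin 7)) = (1) * b {1,2} + (1) * b {3,4} := by
  rw [wedge, show (({0,1,2,3,4} : Finset (Fin 7)).powerset.filter (fun A => A.card = 2)) = ({{0,1}, {0,2}, {0,3}, {0,4}, {1,2}, {1,3}, {1,4}, {2,3}, {2,4}, {3,4}} : Finset (Finset (Fin 7))) from by decide]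
  simp (config := { decide := true }) only [mergeSign_if, phi, bm, Pi.add_apply, Pi.sub_apply,
    Finset.sum_insert, Finset.mem_insert, Finset.mem_singleton, Finset.sum_singleton]
  norm_num

lemma hs_2 (b : Form) : hstar 2 b ({0,1,2,3,5} : Finset (Fin 7)) = -b {4,6} := by
  rw [hstar, if_pos (by decide), mergeSign_if, if_neg (by decide), show (({0,1,2,3,5} : Finset (Fin 7))ᶜ : Finset (Fin 7)) = {4,6} from by decide]
  ring
lemma wd_2 (b : Form) : wedge 2 b phi ({0,1,2,3,5} : Finset (Fin 7)) = (-1) * b {0,2} + (1) * b {3,5} := by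
  rw [wedge, show (({0,1,2,3,5} : Finset (Fin 7)).powerset.filter (fun A => A.card = 2)) = ({{0,1}, {0,2}, {0,3}, {0,5}, {1,2}, {1,3}, {1,5}, {2,3}, {2,5}, {3,5}} : Finset (Finset (Fin 7))) from by decide]
  simp (config := { decide := true }) only [mergeSign_if, phi, bm, Pi.add_apply, Pi.sub_apply,
    Finset.sum_insert, Finset.mem_insert, Finset.mem_singleton, Finset.sum_singleton]
  norm_num

lemma hs_3 (b : Form) : hstar 2 b ({0,1,2,3,6} : Finset (Fin 7)) = b {4,5} := by
  rw [hstar, if_pos (by decide), mergeSign_if, if_pos (by decide), show (({0,1,2,3,6} : Finset (Fin 7))ᶜ : Finset (Fin 7)) = {4,5} from by decide]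
  ring
lemma wd_3 (b : Form) : wedge 2 b phi ({0,1,2,3,6} : Finset (Fin 7)) = (-1) * b {0,1} + (1) * b {3,6} := by
  rw [wedge, show (({0,1,2,3,6} : Finset (Fin 7)).powerset.filter (fun A => A.card = 2)) = ({{0,1}, {0,2}, {0,3}, {0,6}, {1,2}, {1,3}, {1,6}, {2,3}, {2,6}, {3,6}} : Finset (Finset (Fin 7))) from by decide]
  simp (config := { decide := true }) only [mergeSign_if, phi, bm, Pi.add_apply, Pi.sub_apply,
    Finset.sum_insert, Finset.mem_insert, Finset.mem_singleton, Finset.sum_singleton]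
  norm_num

lemma hs_4 (b : Form) : hstar 2 b ({0,1,2,4,5} : Finset (Fin 7)) = b {3,6} := by
  rw [hstar, if_pos (by decide), mergeSign_if, if_pos (by decide), show (({0,1,2,4,5} : Finset (Fin 7))ᶜ : Finset (Fin 7)) = {3,6} from by decide]
  ring
lemma wd_4 (b : Form) : wedge 2 b phi ({0,1,2,4,5} : Finset (Fin 7)) = (-1) * b {0,1} + (1) * b {4,5} := by
  rw [wedge, show (({0,1,2,4,5} : Finset (Fin 7)).powerset.filter (fun A => A.card = 2)) = ({{0,1}, {0,2}, {0,4}, {0,5}, {1,2}, {1,4}, {1,5}, {2,4}, {2,5}, {4,5}} : Finset (Finset (Fin 7))) from by decide]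
  simp (config := { decide := true }) only [mergeSign_if, phi, bm, Pi.add_apply, Pi.sub_apply,
    Finset.sum_insert, Finset.mem_insert, Finset.mem_singleton, Finset.sum_singleton]
  norm_num

lemma hs_5 (b : Form) : hstar 2 b ({0,1,2,4,6} : Finset (Fin 7)) = -b {3,5} := by
  rw [hstar, if_pos (by decide), mergeSign_if, if_neg (by decide), show (({0,1,2,4,6} : Finset (Fin 7))ᶜ : Finset (Fin 7)) = {3,5} from by decide]
  ring
lemma wd_5 (b : Form) : wedge 2 b phi ({0,1,2,4,6} : Finset (Fin 7)) = (1) * b {0,2} + (1) * b {4,6} := by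
  rw [wedge, show (({0,1,2,4,6} : Finset (Fin 7)).powerset.filter (fun A => A.card = 2)) = ({{0,1}, {0,2}, {0,4}, {0,6}, {1,2}, {1,4}, {1,6}, {2,4}, {2,6}, {4,6}} : Finset (Finset (Fin 7))) from by decide]
  simp (config := { decide := true }) only [mergeSign_if, phi, bm, Pi.add_apply, Pi.sub_apply,
    Finset.sum_insert, Finset.mem_insert, Finset.mem_singleton, Finset.sum_singleton]
  norm_num

lemma hs_6 (b : Form) : hstar 2 b ({0,1,2,5,6} : Finset (Fin 7)) = b {3,4} := by
  rw [hstar, if_pos (by decide), mergeSign_if, if_pos (by decide), show (({0,1,2,5,6} : Finset (Fin 7))ᶜ : Finset (Fin 7)) = {3,4} from by decide]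
  ring
lemma wd_6 (b : Form) : wedge 2 b phi ({0,1,2,5,6} : Finset (Fin 7)) = (1) * b {1,2} + (1) * b {5,6} := by
  rw [wedge, show (({0,1,2,5,6} : Finset (Fin 7)).powerset.filter (fun A => A.card = 2)) = ({{0,1}, {0,2}, {0,5}, {0,6}, {1,2}, {1,5}, {1,6}, {2,5}, {2,6}, {5,6}} : Finset (Finset (Fin 7))) from by decide]
  simp (config := { decide := true }) only [mergeSign_if, phi, bm, Pi.add_apply, Pi.sub_apply,
    Finset.sum_insert, Finset.mem_insert, Finset.mem_singleton, Finset.sum_singleton]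
  norm_num

lemma hs_7 (b : Form) : hstar 2 b ({0,1,3,4,5} : Finset (Fin 7)) = -b {2,6} := by
  rw [hstar, if_pos (by decide), mergeSign_if, if_neg (by decide), show (({0,1,3,4,5} : Finset (Fin 7))ᶜ : Finset (Fin 7)) = {2,6} from by decide]
  ring
lemma wd_7 (b : Form) : wedge 2 b phi ({0,1,3,4,5} : Finset (Fin 7)) = (1) * b {0,4} + (1) * b {1,5} := by
  rw [wedge, show (({0,1,3,4,5} : Finset (Fin 7)).powerset.filter (fun A => A.card = 2)) = ({{0,1}, {0,3}, {0,4}, {0,5}, {1,3}, {1,4}, {1,5}, {3,4}, {3,5}, {4,5}} : Finset (Finset (Fin 7))) from by decide]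
  simp (config := { decide := true }) only [mergeSign_if, phi, bm, Pi.add_apply, Pi.sub_apply,
    Finset.sum_insert, Finset.mem_insert, Finset.mem_singleton, Finset.sum_singleton]
  norm_num

lemma hs_8 (b : Form) : hstar 2 b ({0,1,3,4,6} : Finset (Fin 7)) = b {2,5} := by
  rw [hstar, if_pos (by decide), mergeSign_if, if_pos (by decide), show (({0,1,3,4,6} : Finset (Fin 7))ᶜ : Finset (Fin 7)) = {2,5} from by decide]
  ring
lemma wd_8 (b : Form) : wedge 2 b phi ({0,1,3,4,6} : Finset (Fin 7)) = (1) * b {0,3} + (1) * b {1,6} := by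
  rw [wedge, show (({0,1,3,4,6} : Finset (Fin 7)).powerset.filter (fun A => A.card = 2)) = ({{0,1}, {0,3}, {0,4}, {0,6}, {1,3}, {1,4}, {1,6}, {3,4}, {3,6}, {4,6}} : Finset (Finset (Fin 7))) from by decide]
  simp (config := { decide := true }) only [mergeSign_if, phi, bm, Pi.add_apply, Pi.sub_apply,
    Finset.sum_insert, Finset.mem_insert, Finset.mem_singleton, Finset.sum_singleton]
  norm_num

lemma hs_9 (b : Form) : hstar 2 b ({0,1,3,5,6} : Finset (Fin 7)) = -b {2,4} := by
  rw [hstar, if_pos (by decide), mergeSign_if, if_neg (by decide), show (({0,1,3,5,6} : Finset (Fin 7))ᶜ : Finset (Fin 7)) = {2,4} from by decide]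
  ring
lemma wd_9 (b : Form) : wedge 2 b phi ({0,1,3,5,6} : Finset (Fin 7)) = (-1) * b {0,6} + (1) * b {1,3} := by
  rw [wedge, show (({0,1,3,5,6} : Finset (Fin 7)).powerset.filter (fun A => A.card = 2)) = ({{0,1}, {0,3}, {0,5}, {0,6}, {1,3}, {1,5}, {1,6}, {3,5}, {3,6}, {5,6}} : Finset (Finset (Fin 7))) from by decide]
  simp (config := { decide := true }) only [mergeSign_if, phi, bm, Pi.add_apply, Pi.sub_apply,
    Finset.sum_insert, Finset.mem_insert, Finset.mem_singleton, Finset.sum_singleton]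
  norm_num

lemma hs_10 (b : Form) : hstar 2 b ({0,1,4,5,6} : Finset (Fin 7)) = b {2,3} := by
  rw [hstar, if_pos (by decide), mergeSign_if, if_pos (by decide), show (({0,1,4,5,6} : Finset (Fin 7))ᶜ : Finset (Fin 7)) = {2,3} from by decide]
  ring
lemma wd_10 (b : Form) : wedge 2 b phi ({0,1,4,5,6} : Finset (Fin 7)) = (-1) * b {0,5} + (1) * b {1,4} := by
  rw [wedge, show (({0,1,4,5,6} : Finset (Fin 7)).powerset.filter (fun A => A.card = 2)) = ({{0,1}, {0,4}, {0,5}, {0,6}, {1,4}, {1,5}, {1,6}, {4,5}, {4,6}, {5,6}} : Finset (Finset (Fin 7))) from by decide]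
  simp (config := { decide := true }) only [mergeSign_if, phi, bm, Pi.add_apply, Pi.sub_apply,
    Finset.sum_insert, Finset.mem_insert, Finset.mem_singleton, Finset.sum_singleton]
  norm_num

lemma hs_11 (b : Form) : hstar 2 b ({0,2,3,4,5} : Finset (Fin 7)) = b {1,6} := by
  rw [hstar, if_pos (by decide), mergeSign_if, if_pos (by decide), show (({0,2,3,4,5} : Finset (Fin 7))ᶜ : Finset (Fin 7)) = {1,6} from by decide]
  ring
lemma wd_11 (b : Form) : wedge 2 b phi ({0,2,3,4,5} : Finset (Fin 7)) = (1) * b {0,3} + (1) * b {2,5} := by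
  rw [wedge, show (({0,2,3,4,5} : Finset (Fin 7)).powerset.filter (fun A => A.card = 2)) = ({{0,2}, {0,3}, {0,4}, {0,5}, {2,3}, {2,4}, {2,5}, {3,4}, {3,5}, {4,5}} : Finset (Finset (Fin 7))) from by decide]
  simp (config := { decide := true }) only [mergeSign_if, phi, bm, Pi.add_apply, Pi.sub_apply,
    Finset.sum_insert, Finset.mem_insert, Finset.mem_singleton, Finset.sum_singleton]
  norm_num

lemma hs_12 (b : Form) : hstar 2 b ({0,2,3,4,6} : Finset (Fin 7)) = -b {1,5} := by
  rw [hstar, if_pos (by decide), mergeSign_if, if_neg (by decide), show (({0,2,3,4,6} : Finset (Fin 7))ᶜ : Finset (Fin 7)) = {1,5} from by decide]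
  ring
lemma wd_12 (b : Form) : wedge 2 b phi ({0,2,3,4,6} : Finset (Fin 7)) = (-1) * b {0,4} + (1) * b {2,6} := by
  rw [wedge, show (({0,2,3,4,6} : Finset (Fin 7)).powerset.filter (fun A => A.card = 2)) = ({{0,2}, {0,3}, {0,4}, {0,6}, {2,3}, {2,4}, {2,6}, {3,4}, {3,6}, {4,6}} : Finset (Finset (Fin 7))) from by decide]
  simp (config := { decide := true }) only [mergeSign_if, phi, bm, Pi.add_apply, Pi.sub_apply,
    Finset.sum_insert, Finset.mem_insert, Finset.mem_singleton, Finset.sum_singleton]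
  norm_num

lemma hs_13 (b : Form) : hstar 2 b ({0,2,3,5,6} : Finset (Fin 7)) = b {1,4} := by
  rw [hstar, if_pos (by decide), mergeSign_if, if_pos (by decide), show (({0,2,3,5,6} : Finset (Fin 7))ᶜ : Finset (Fin 7)) = {1,4} from by decide]
  ring
lemma wd_13 (b : Form) : wedge 2 b phi ({0,2,3,5,6} : Finset (Fin 7)) = (-1) * b {0,5} + (1) * b {2,3} := by
  rw [wedge, show (({0,2,3,5,6} : Finset (Fin 7)).powerset.filter (fun A => A.card = 2)) = ({{0,2}, {0,3}, {0,5}, {0,6}, {2,3}, {2,5}, {2,6}, {3,5}, {3,6}, {5,6}} : Finset (Finset (Fin 7))) from by decide]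
  simp (config := { decide := true }) only [mergeSign_if, phi, bm, Pi.add_apply, Pi.sub_apply,
    Finset.sum_insert, Finset.mem_insert, Finset.mem_singleton, Finset.sum_singleton]
  norm_num

lemma hs_14 (b : Form) : hstar 2 b ({0,2,4,5,6} : Finset (Fin 7)) = -b {1,3} := by
  rw [hstar, if_pos (by decide), mergeSign_if, if_neg (by decide), show (({0,2,4,5,6} : Finset (Fin 7))ᶜ : Finset (Fin 7)) = {1,3} from by decide]
  ring
lemma wd_14 (b : Form) : wedge 2 b phi ({0,2,4,5,6} : Finset (Fin 7)) = (1) * b {0,6} + (1) * b {2,4} := by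
  rw [wedge, show (({0,2,4,5,6} : Finset (Fin 7)).powerset.filter (fun A => A.card = 2)) = ({{0,2}, {0,4}, {0,5}, {0,6}, {2,4}, {2,5}, {2,6}, {4,5}, {4,6}, {5,6}} : Finset (Finset (Fin 7))) from by decide]
  simp (config := { decide := true }) only [mergeSign_if, phi, bm, Pi.add_apply, Pi.sub_apply,
    Finset.sum_insert, Finset.mem_insert, Finset.mem_singleton, Finset.sum_singleton]
  norm_num

lemma hs_15 (b : Form) : hstar 2 b ({0,3,4,5,6} : Finset (Fin 7)) = b {1,2} := by
  rw [hstar, if_pos (by decide), mergeSign_if, if_pos (by decide), show (({0,3,4,5,6} : Finset (Fin 7))ᶜ : Finset (Fin 7)) = {1,2} from by decide]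
  ring
lemma wd_15 (b : Form) : wedge 2 b phi ({0,3,4,5,6} : Finset (Fin 7)) = (1) * b {3,4} + (1) * b {5,6} := by
  rw [wedge, show (({0,3,4,5,6} : Finset (Fin 7)).powerset.filter (fun A => A.card = 2)) = ({{0,3}, {0,4}, {0,5}, {0,6}, {3,4}, {3,5}, {3,6}, {4,5}, {4,6}, {5,6}} : Finset (Finset (Fin 7))) from by decide]
  simp (config := { decide := true }) only [mergeSign_if, phi, bm, Pi.add_apply, Pi.sub_apply,
    Finset.sum_insert, Finset.mem_insert, Finset.mem_singleton, Finset.sum_singleton]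
  norm_num

lemma hs_16 (b : Form) : hstar 2 b ({1,2,3,4,5} : Finset (Fin 7)) = -b {0,6} := by
  rw [hstar, if_pos (by decide), mergeSign_if, if_neg (by decide), show (({1,2,3,4,5} : Finset (Fin 7))ᶜ : Finset (Fin 7)) = {0,6} from by decide]
  ring
lemma wd_16 (b : Form) : wedge 2 b phi ({1,2,3,4,5} : Finset (Fin 7)) = (1) * b {1,3} + (-1) * b {2,4} := by
  rw [wedge, show (({1,2,3,4,5} : Finset (Fin 7)).powerset.filter (fun A => A.card = 2)) = ({{1,2}, {1,3}, {1,4}, {1,5}, {2,3}, {2,4}, {2,5}, {3,4}, {3,5}, {4,5}} : Finset (Finset (Fin 7))) from by decide]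
  simp (config := { decide := true }) only [mergeSign_if, phi, bm, Pi.add_apply, Pi.sub_apply,
    Finset.sum_insert, Finset.mem_insert, Finset.mem_singleton, Finset.sum_singleton]
  norm_num

lemma hs_17 (b : Form) : hstar 2 b ({1,2,3,4,6} : Finset (Fin 7)) = b {0,5} := by
  rw [hstar, if_pos (by decide), mergeSign_if, if_pos (by decide), show (({1,2,3,4,6} : Finset (Fin 7))ᶜ : Finset (Fin 7)) = {0,5} from by decide]
  ring
lemma wd_17 (b : Form) : wedge 2 b phi ({1,2,3,4,6} : Finset (Fin 7)) = (-1) * b {1,4} + (-1) * b {2,3} := by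
  rw [wedge, show (({1,2,3,4,6} : Finset (Fin 7)).powerset.filter (fun A => A.card = 2)) = ({{1,2}, {1,3}, {1,4}, {1,6}, {2,3}, {2,4}, {2,6}, {3,4}, {3,6}, {4,6}} : Finset (Finset (Fin 7))) from by decide]
  simp (config := { decide := true }) only [mergeSign_if, phi, bm, Pi.add_apply, Pi.sub_apply,
    Finset.sum_insert, Finset.mem_insert, Finset.mem_singleton, Finset.sum_singleton]
  norm_num

lemma hs_18 (b : Form) : hstar 2 b ({1,2,3,5,6} : Finset (Fin 7)) = -b {0,4} := by
  rw [hstar, if_pos (by decide), mergeSign_if, if_neg (by decide), show (({1,2,3,5,6} : Finset (Fin 7))ᶜ : Finset (Fin 7)) = {0,4} from by decide]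
  ring
lemma wd_18 (b : Form) : wedge 2 b phi ({1,2,3,5,6} : Finset (Fin 7)) = (-1) * b {1,5} + (1) * b {2,6} := by
  rw [wedge, show (({1,2,3,5,6} : Finset (Fin 7)).powerset.filter (fun A => A.card = 2)) = ({{1,2}, {1,3}, {1,5}, {1,6}, {2,3}, {2,5}, {2,6}, {3,5}, {3,6}, {5,6}} : Finset (Finset (Fin 7))) from by decide]
  simp (config := { decide := true }) only [mergeSign_if, phi, bm, Pi.add_apply, Pi.sub_apply,
    Finset.sum_insert, Finset.mem_insert, Finset.mem_singleton, Finset.sum_singleton]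
  norm_num

lemma hs_19 (b : Form) : hstar 2 b ({1,2,4,5,6} : Finset (Fin 7)) = b {0,3} := by
  rw [hstar, if_pos (by decide), mergeSign_if, if_pos (by decide), show (({1,2,4,5,6} : Finset (Fin 7))ᶜ : Finset (Fin 7)) = {0,3} from by decide]
  ring
lemma wd_19 (b : Form) : wedge 2 b phi ({1,2,4,5,6} : Finset (Fin 7)) = (1) * b {1,6} + (1) * b {2,5} := by
  rw [wedge, show (({1,2,4,5,6} : Finset (Fin 7)).powerset.filter (fun A => A.card = 2)) = ({{1,2}, {1,4}, {1,5}, {1,6}, {2,4}, {2,5}, {2,6}, {4,5}, {4,6}, {5,6}} : Finset (Finset (Fin 7))) from by decide]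
  simp (config := { decide := true }) only [mergeSign_if, phi, bm, Pi.add_apply, Pi.sub_apply,
    Finset.sum_insert, Finset.mem_insert, Finset.mem_singleton, Finset.sum_singleton]
  norm_num

lemma hs_20 (b : Form) : hstar 2 b ({1,3,4,5,6} : Finset (Fin 7)) = -b {0,2} := by
  rw [hstar, if_pos (by decide), mergeSign_if, if_neg (by decide), show (({1,3,4,5,6} : Finset (Fin 7))ᶜ : Finset (Fin 7)) = {0,2} from by decide]
  ring
lemma wd_20 (b : Form) : wedge 2 b phi ({1,3,4,5,6} : Finset (Fin 7)) = (1) * b {3,5} + (-1) * b {4,6} := by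
  rw [wedge, show (({1,3,4,5,6} : Finset (Fin 7)).powerset.filter (fun A => A.card = 2)) = ({{1,3}, {1,4}, {1,5}, {1,6}, {3,4}, {3,5}, {3,6}, {4,5}, {4,6}, {5,6}} : Finset (Finset (Fin 7))) from by decide]
  simp (config := { decide := true }) only [mergeSign_if, phi, bm, Pi.add_apply, Pi.sub_apply,
    Finset.sum_insert, Finset.mem_insert, Finset.mem_singleton, Finset.sum_singleton]
  norm_num

lemma hs_21 (b : Form) : hstar 2 b ({2,3,4,5,6} : Finset (Fin 7)) = b {0,1} := by
  rw [hstar, if_pos (by decide), mergeSign_if, if_pos (by decide), show (({2,3,4,5,6} : Finset (Fin 7))ᶜ : Finset (Fin 7)) = {0,1} from by decide]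
  ring
lemma wd_21 (b : Form) : wedge 2 b phi ({2,3,4,5,6} : Finset (Fin 7)) = (-1) * b {3,6} + (-1) * b {4,5} := by
  rw [wedge, show (({2,3,4,5,6} : Finset (Fin 7)).powerset.filter (fun A => A.card = 2)) = ({{2,3}, {2,4}, {2,5}, {2,6}, {3,4}, {3,5}, {3,6}, {4,5}, {4,6}, {5,6}} : Finset (Finset (Fin 7))) from by decide]
  simp (config := { decide := true }) only [mergeSign_if, phi, bm, Pi.add_apply, Pi.sub_apply,
    Finset.sum_insert, Finset.mem_insert, Finset.mem_singleton, Finset.sum_singleton]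
  norm_num


lemma forward_eq (X : Vec) : hstar 2 (iphi X) = (2 : ℝ)⁻¹ • wedge 2 (iphi X) phi := by
  funext S
  by_cases h : S.card = 5
  · have hm := fives_mem S h
    fin_cases hm <;>
      · simp (config := { decide := true }) only [Pi.smul_apply, smul_eq_mul, hs_1, hs_2, hs_3, hs_4, hs_5, hs_6, hs_7, hs_8, hs_9, hs_10, hs_11, hs_12, hs_13, hs_14, hs_15, hs_16, hs_17, hs_18, hs_19, hs_20, hs_21, wd_1, wd_2, wd_3, wd_4, wd_5, wd_6, wd_7, wd_8, wd_9, wd_10, wd_11, wd_12, wd_13, wd_14, wd_15, wd_16, wd_17, wd_18, wd_19, wd_20, wd_21, iphi]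
        norm_num
        try ring
  · rw [Pi.smul_apply, wedge_phi_deg h, hstar, if_neg (by simpa using h), smul_zero]


theorem stmt5 :
    Function.Injective (fun X : Vec => iprod X phi) ∧
    Set.range (fun X : Vec => iprod X phi)
      = {β : Form | IsDeg 2 β ∧ hstar 2 β = (2 : ℝ)⁻¹ • wedge 2 β phi} := by
  constructor
  · intro X Y h
    simp only [iprod_phi_eq] at h
    funext i
    fin_cases i
    · simpa (config := { decide := true }) [iphi] using congrFun h ({1,2} : Finset (Fin 7))
    · simpa (config := { decide := true }) [iphi] using congrFun h ({3,5} : Finset (Fin 7))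
    · simpa [iphi] using congrFun h ({0,1} : Finset (Fin 7))
    · simpa (config := { decide := true }) [iphi] using congrFun h ({2,6} : Finset (Fin 7))
    · simpa (config := { decide := true }) [iphi] using congrFun h ({0,3} : Finset (Fin 7))
    · simpa (config := { decide := true }) [iphi] using congrFun h ({1,3} : Finset (Fin 7))
    · simpa (config := { decide := true }) [iphi] using congrFun h ({0,5} : Finset (Fin 7))
  · ext β
    constructor
    · rintro ⟨X, rfl⟩
      refine ⟨fun S hS => iprod_phi_deg hS, ?_⟩
      simp only [iprod_phi_eq]
      exact forward_eq X
    · rintro ⟨hdeg, heq⟩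
      refine ⟨(fun i => if i = 0 then β {1,2} else if i = 1 then -β {0,2} else if i = 2 then β {0,1}
        else if i = 3 then -β {0,4} else if i = 4 then β {0,3} else if i = 5 then -β {0,6}
        else β {0,5} : Vec), ?_⟩
      show iprod _ phi = β
      rw [iprod_phi_eq]
      have e1 := congrFun heq ({0,1,2,3,4} : Finset (Fin 7))
      have e2 := congrFun heq ({0,1,2,3,5} : Finset (Fin 7))
      have e3 := congrFun heq ({0,1,2,3,6} : Finset (Fin 7))
      have e4 := congrFun heq ({0,1,2,4,5} : Finset (Fin 7))
      have e5 := congrFun heq ({0,1,2,4,6} : Finset (Fin 7))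
      have e6 := congrFun heq ({0,1,2,5,6} : Finset (Fin 7))
      have e7 := congrFun heq ({0,1,3,4,5} : Finset (Fin 7))
      have e8 := congrFun heq ({0,1,3,4,6} : Finset (Fin 7))
      have e9 := congrFun heq ({0,1,3,5,6} : Finset (Fin 7))
      have e10 := congrFun heq ({0,1,4,5,6} : Finset (Fin 7))
      have e11 := congrFun heq ({0,2,3,4,5} : Finset (Fin 7))
      have e12 := congrFun heq ({0,2,3,4,6} : Finset (Fin 7))
      have e13 := congrFun heq ({0,2,3,5,6} : Finset (Fin 7))
      have e14 := congrFun heq ({0,2,4,5,6} : Finset (Fin 7))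
      have e15 := congrFun heq ({0,3,4,5,6} : Finset (Fin 7))
      have e16 := congrFun heq ({1,2,3,4,5} : Finset (Fin 7))
      have e17 := congrFun heq ({1,2,3,4,6} : Finset (Fin 7))
      have e18 := congrFun heq ({1,2,3,5,6} : Finset (Fin 7))
      have e19 := congrFun heq ({1,2,4,5,6} : Finset (Fin 7))
      have e20 := congrFun heq ({1,3,4,5,6} : Finset (Fin 7))
      have e21 := congrFun heq ({2,3,4,5,6} : Finset (Fin 7))
      simp only [Pi.smul_apply, smul_eq_mul, hs_1, hs_2, hs_3, hs_4, hs_5, hs_6, hs_7, hs_8, hs_9, hs_10, hs_11, hs_12, hs_13, hs_14, hs_15, hs_16, hs_17, hs_18, hs_19, hs_20, hs_21, wd_1, wd_2, wd_3, wd_4, wd_5, wd_6, wd_7, wd_8, wd_9, wd_10, wd_11, wd_12, wd_13, wd_14, wd_15, wd_16, wd_17, wd_18, wd_19, wd_20, wd_21] at e1 e2 e3 e4 e5 e6 e7 e8 e9 e10 e11 e12 e13 e14 e15 e16 e17 e18 e19 e20 e21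
      norm_num at e1 e2 e3 e4 e5 e6 e7 e8 e9 e10 e11 e12 e13 e14 e15 e16 e17 e18 e19 e20 e21
      funext S
      by_cases h : S.card = 2
      · have hm := pairs_mem S h
        fin_cases hm <;>
          · simp (config := { decide := true }) only [iphi]
            norm_num
            try linarith [e1, e2, e3, e4, e5, e6, e7, e8, e9, e10, e11, e12, e13, e14, e15, e16, e17, e18, e19, e20, e21]
      · rw [iphi_deg h, hdeg S h]
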